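/- Let A be a (not necessarily unital) complex normed algebra and let e ∈ A be a contractive quasi-identity, i.e., ‖e‖ ≤ 1 and a = e a + a e − e a e for all a ∈ A. Then e is an idempotent (e e = e); consequently ‖e‖ is either 0 or 1. -/

import Mathlib

/-- A contractive quasi-identity of a (not necessarily unital) complex normed
algebra is an idempotent, and consequently its norm is either `0` or `1`. -/
theorem stmt_5 {A : Type*} [NonUnitalNormedRing A] [NormedSpace ℂ A]
    [IsScalarTower ℂ A A] [SMulCommClass ℂ A A]
    (e : A) (hnorm : ‖e‖ ≤ 1) (he : ∀ a : A, a = e * a + a * e - e * a * e) :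
    e * e = e ∧ (‖e‖ = 0 ∨ ‖e‖ = 1) := by
  have h := he e
  -- h : e = e * e + e * e - e * e * e
  have h' : e + e * e * e = e * e + e * e := by
    nth_rewrite 1 [h]; abel
  have h3 : e * (e * e) = e * e + e * e - e := by
    rw [← mul_assoc, eq_sub_iff_add_eq, add_comm]; exact h'
  have hy : ∀ n : ℕ, ‖((n : ℂ) + 1) • (e * e) - (n : ℂ) • e‖ ≤ 1 := by
    intro n
    induction n with
    | zero =>
      simp only [Nat.cast_zero, zero_add, one_smul, zero_smul, sub_zero]
      calc ‖e * e‖ ≤ ‖e‖ * ‖e‖ := norm_mul_le e e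
        _ ≤ 1 * 1 := by nlinarith [norm_nonneg e]
        _ = 1 := by norm_num
    | succ n ih =>
      have key : (((n : ℕ) + 1 : ℕ) : ℂ) • e + (((n : ℕ) + 1 : ℕ) + 1 : ℂ) • (e * e)
          - (((n : ℕ) + 1 : ℕ) : ℂ) • e - (((n : ℕ) + 1 : ℕ) : ℂ) • e
          = e * (((n : ℂ) + 1) • (e * e) - (n : ℂ) • e) := by
        rw [mul_sub, mul_smul_comm, mul_smul_comm, h3]
        push_cast
        module
      have keq : ((((n + 1 : ℕ)) : ℂ) + 1) • (e * e) - ((n + 1 : ℕ) : ℂ) • e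
          = e * (((n : ℂ) + 1) • (e * e) - (n : ℂ) • e) := by
        rw [← key]; push_cast; module
      rw [keq]
      calc ‖e * (((n : ℂ) + 1) • (e * e) - (n : ℂ) • e)‖
          ≤ ‖e‖ * ‖((n : ℂ) + 1) • (e * e) - (n : ℂ) • e‖ := norm_mul_le _ _
        _ ≤ 1 * 1 := by
            apply mul_le_mul hnorm ih (norm_nonneg _) (by norm_num)
        _ = 1 := by norm_num
  have hd : ∀ n : ℕ, ‖e * e - e‖ ≤ 2 / ((n : ℝ) + 1) := by
    intro n
    have hrep : ((n : ℂ) + 1) • (e * e - e)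
        = (((n : ℂ) + 1) • (e * e) - (n : ℂ) • e) - e := by module
    have hb : ‖((n : ℂ) + 1) • (e * e - e)‖ ≤ 2 := by
      rw [hrep]
      calc ‖(((n : ℂ) + 1) • (e * e) - (n : ℂ) • e) - e‖
          ≤ ‖((n : ℂ) + 1) • (e * e) - (n : ℂ) • e‖ + ‖e‖ := norm_sub_le _ _
        _ ≤ 1 + 1 := add_le_add (hy n) hnorm
        _ = 2 := by norm_num
    rw [norm_smul] at hb
    have hc : ‖(n : ℂ) + 1‖ = (n : ℝ) + 1 := by
      rw [show ((n : ℂ) + 1) = ((n + 1 : ℕ) : ℂ) by push_cast; ring,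
        Complex.norm_natCast]
      push_cast
      ring
    rw [hc] at hb
    have hpos : (0 : ℝ) < (n : ℝ) + 1 := by positivity
    rw [le_div_iff₀ hpos, mul_comm]
    exact hb
  have h0 : ‖e * e - e‖ ≤ 0 := by
    have t : Filter.Tendsto (fun n : ℕ => 2 / ((n : ℝ) + 1)) Filter.atTop (nhds 0) := by
      have := (tendsto_one_div_add_atTop_nhds_zero_nat :
        Filter.Tendsto (fun n : ℕ => 1 / ((n : ℝ) + 1)) Filter.atTop (nhds 0))
      have h2 := Filter.Tendsto.const_mul (2 : ℝ) this
      simpa [mul_one_div, div_eq_mul_inv] using h2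
    exact ge_of_tendsto' t hd
  have hee : e * e = e := by
    have : ‖e * e - e‖ = 0 := le_antisymm h0 (norm_nonneg _)
    rw [norm_eq_zero, sub_eq_zero] at this
    exact this
  refine ⟨hee, ?_⟩
  rcases eq_or_lt_of_le (norm_nonneg e) with hz | hz
  · left; exact hz.symm
  · right
    have : ‖e‖ ≤ ‖e‖ * ‖e‖ := by
      calc ‖e‖ = ‖e * e‖ := by rw [hee]
        _ ≤ ‖e‖ * ‖e‖ := norm_mul_le e e
    nlinarith
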